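/- In any left brace A, for every a, b ∈ A and every positive integer n, one has a^{∘n} * b = Σ_{i=1}^{n} C(n,i) e_i, where e_1 = a * b and e_{i+1} = a * e_i, and a^{∘n} denotes the n-fold product a ∘ ⋯ ∘ a. -/

import Mathlib

/-- A left brace: an abelian group `(A,+)` together with a group operation `circ`
(whose identity is `0`) satisfying `a ∘ (b + c) + a = a ∘ b + a ∘ c`. -/
structure LeftBrace (A : Type*) [AddCommGroup A] where
  circ : A → A → A
  inv : A → A
  circ_assoc : ∀ a b c, circ (circ a b) c = circ a (circ b c)
  circ_zero : ∀ a, circ a 0 = a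
  zero_circ : ∀ a, circ 0 a = a
  inv_circ : ∀ a, circ (inv a) a = 0
  compat : ∀ a b c, circ a (b + c) + a = circ a b + circ a c

namespace LeftBrace

variable {A : Type*} [AddCommGroup A]

/-- The star operation `a * b = a ∘ b - a - b`. -/
def star (B : LeftBrace A) (a b : A) : A := B.circ a b - a - b

/-- `circPow B a n` is the product `a ∘ a ∘ ⋯ ∘ a` of `n` copies of `a`. -/
def circPow (B : LeftBrace A) (a : A) : ℕ → A
  | 0 => 0
  | n + 1 => B.circ a (B.circPow a n)

end LeftBrace

/-- The sequence e_1 = a * b, e_{i+1} = a * e_i (with the convention e 0 = b). -/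
def eSeq {A : Type*} [AddCommGroup A] (B : LeftBrace A) (a b : A) : ℕ → A
  | 0 => b
  | n + 1 => B.star a (eSeq B a b n)

section Aux

variable {A : Type*} [AddCommGroup A] (B : LeftBrace A)

lemma circ_add (a x y : A) : B.circ a (x + y) = B.circ a x + B.circ a y - a := by
  exact eq_sub_of_add_eq (B.compat a x y)

lemma star_add (a x y : A) : B.star a (x + y) = B.star a x + B.star a y := by
  simp only [LeftBrace.star, circ_add]
  abel

/-- `star a` as an additive endomorphism. -/
def starHom (a : A) : AddMonoid.End A :=
  AddMonoidHom.mk' (B.star a) (star_add B a)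

lemma starHom_pow_apply (a b : A) (i : ℕ) : ((starHom B a) ^ i) b = eSeq B a b i := by
  induction i with
  | zero => rfl
  | succ i ih =>
    rw [pow_succ']
    show (starHom B a) (((starHom B a) ^ i) b) = _
    rw [ih]; rfl

lemma circ_circPow (a b : A) (n : ℕ) :
    B.circ (B.circPow a n) b - B.circPow a n = ((1 + starHom B a) ^ n) b := by
  induction n with
  | zero => simp [LeftBrace.circPow, B.zero_circ]
  | succ n ih =>
    have key : B.circ (B.circPow a (n + 1)) b - B.circPow a (n + 1)
        = ((1 + starHom B a)) (B.circ (B.circPow a n) b - B.circPow a n) := by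
      show _ = (B.circ (B.circPow a n) b - B.circPow a n) +
          B.star a (B.circ (B.circPow a n) b - B.circPow a n)
      simp only [LeftBrace.circPow, B.circ_assoc, LeftBrace.star]
      have h := circ_add B a (B.circ (B.circPow a n) b - B.circPow a n) (B.circPow a n)
      rw [sub_add_cancel] at h
      rw [h]; abel
    rw [key, ih, pow_succ']
    rfl

end Aux

/-- In any left brace, a^{∘n} * b = ∑_{i=1}^n C(n,i) e_i. -/
theorem stmt1 {A : Type*} [AddCommGroup A] (B : LeftBrace A) (a b : A) (n : ℕ) (hn : 0 < n) :
    B.star (B.circPow a n) b = ∑ i ∈ Finset.Icc 1 n, n.choose i • eSeq B a b i := by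
  have hpow : ((1 + starHom B a) ^ n) =
      ∑ i ∈ Finset.range (n + 1), n.choose i • (starHom B a) ^ i := by
    rw [add_comm, (Commute.one_right (starHom B a)).add_pow]
    refine Finset.sum_congr rfl fun i _ => ?_
    rw [one_pow, mul_one, nsmul_eq_mul]
    exact ((Nat.cast_commute (n.choose i) (starHom B a ^ i)).symm)
  have hb : B.star (B.circPow a n) b = ((1 + starHom B a) ^ n) b - b := by
    rw [← circ_circPow]
    simp [LeftBrace.star]
  rw [hb, hpow]
  have heval : (∑ i ∈ Finset.range (n + 1), n.choose i • (starHom B a) ^ i) b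
      = ∑ i ∈ Finset.range (n + 1), n.choose i • eSeq B a b i := by
    erw [AddMonoidHom.finset_sum_apply]
    exact Finset.sum_congr rfl fun i _ => by
      erw [AddMonoidHom.nsmul_apply, starHom_pow_apply]
  rw [heval]
  have hset : Finset.range (n + 1) = insert 0 (Finset.Icc 1 n) := by
    ext i; simp; omega
  rw [hset, Finset.sum_insert (by simp)]
  simp [eSeq]
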